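/- Let M ≥ 1, N ≥ 0 and r ≥ 1 be integers, x ∈ ℂ, and let a_1,…,a_r and e_1,…,e_r be integers with 0 ≤ a_1 < … < a_r < M, 0 ≤ e_1 < … < e_r < M, and N − e_i + a_j ≡ 0 (mod 2) for all 1 ≤ i,j ≤ r. Then det( q(M,N,a_i,e_j; x, (−1)^{r−1}) )_{i,j=1}^{r} = M^{−r} · det( exp((r−1)πi(a_i−e_j)/M) · Σ_{l=0}^{M−1} exp(−2πi(e_j−a_i)l/M) · ( x·exp(−2πi(l+(r−1)/2)/M) + exp(2πi(l+(r−1)/2)/M) )^N )_{i,j=1}^{r}. -/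

import Mathlib

open Finset Complex Real

/-- The generating function `q(M,N,a,e;x)`. -/
noncomputable def qx (M N : ℕ) (a e : ℤ) (x : ℂ) : ℂ :=
  ∑ d ∈ Finset.range (N + 1),
    if (M : ℤ) ∣ (a + (N : ℤ) - 2 * (d : ℤ) - e) then (N.choose d : ℂ) * x ^ d else 0

/-- The generating function `q(M,N,a,e;x,y)`. -/
noncomputable def qxy (M N : ℕ) (a e : ℤ) (x y : ℂ) : ℂ :=
  ∑ d ∈ Finset.range (N + 1),
    if (M : ℤ) ∣ (a + (N : ℤ) - 2 * (d : ℤ) - e) then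
      (N.choose d : ℂ) * x ^ d * y ^ ((a + (N : ℤ) - 2 * (d : ℤ) - e) / (M : ℤ))
    else 0

lemma root_sum (M : ℕ) (hM : 0 < M) (K : ℤ) :
    ∑ l ∈ Finset.range M, Complex.exp (2 * Real.pi * Complex.I * K / M) ^ l
      = if (M : ℤ) ∣ K then (M : ℂ) else 0 := by
  have hM0 : (M : ℂ) ≠ 0 := Nat.cast_ne_zero.mpr hM.ne'
  by_cases h : (M : ℤ) ∣ K
  · obtain ⟨k, rfl⟩ := h
    have : (2 * Real.pi * Complex.I * (↑(M * k) : ℤ) / M : ℂ) = k * (2 * Real.pi * Complex.I) := by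
      push_cast; field_simp
    rw [if_pos ⟨k, rfl⟩, this, Complex.exp_int_mul_two_pi_mul_I]
    simp
  · rw [if_neg h]
    have hζM : Complex.exp (2 * Real.pi * Complex.I * K / M) ^ M = 1 := by
      rw [← Complex.exp_nat_mul]
      have : (M : ℂ) * (2 * Real.pi * Complex.I * K / M) = K * (2 * Real.pi * Complex.I) := by
        field_simp
      rw [this, Complex.exp_int_mul_two_pi_mul_I]
    have hζ1 : Complex.exp (2 * Real.pi * Complex.I * K / M) ≠ 1 := by
      intro hone
      rw [Complex.exp_eq_one_iff] at hone
      obtain ⟨n, hn⟩ := hone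
      apply h
      refine ⟨n, ?_⟩
      have h2 : (2 * Real.pi * Complex.I : ℂ) ≠ 0 := by
        simp [Real.pi_ne_zero, Complex.I_ne_zero]
      have : (K : ℂ) = M * n := by
        field_simp at hn
        have h3 : 2 * (Real.pi:ℂ) * Complex.I * (K:ℂ) = 2 * (Real.pi:ℂ) * Complex.I * ((M:ℂ) * n) := by
          rw [hn]
        exact mul_left_cancel₀ h2 h3
      exact_mod_cast this
    rw [geom_sum_eq hζ1, hζM]
    simp

lemma Wval (M r : ℕ) (hM : 0 < M) (hr : 1 ≤ r) (k : ℤ) :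
    Complex.exp (2 * Real.pi * Complex.I * (((M : ℤ) * k : ℤ) : ℂ) * (((r : ℂ) - 1) / 2) / M)
      = ((-1 : ℂ) ^ (r - 1)) ^ k := by
  have hM0 : (M : ℂ) ≠ 0 := Nat.cast_ne_zero.mpr hM.ne'
  have hr' : ((r : ℂ) - 1) = ((r - 1 : ℕ) : ℂ) := by
    push_cast [Nat.cast_sub hr]; ring
  have h1 : (2 * (Real.pi:ℂ) * Complex.I * (((M : ℤ) * k : ℤ) : ℂ) * (((r : ℂ) - 1) / 2) / M)
      = ((k * (r - 1 : ℕ) : ℤ) : ℂ) * ((Real.pi:ℂ) * Complex.I) := by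
    rw [hr']; push_cast; field_simp
  rw [h1, Complex.exp_int_mul, Complex.exp_pi_mul_I, zpow_mul, zpow_natCast]
  rw [← zpow_natCast ((-1:ℂ)^k) (r-1), ← zpow_mul, mul_comm, zpow_mul, zpow_natCast]

lemma entry (M N r : ℕ) (hM : 0 < M) (hr : 1 ≤ r) (a e : ℤ) (x : ℂ) :
    (M : ℂ) * qxy M N a e x ((-1 : ℂ) ^ (r - 1)) =
      Complex.exp (((r : ℂ) - 1) * Real.pi * Complex.I * ((a : ℂ) - (e : ℂ)) / M) *
        ∑ l ∈ Finset.range M,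
          Complex.exp (-2 * Real.pi * Complex.I * ((e : ℂ) - (a : ℂ)) * l / M) *
            (x * Complex.exp (-2 * Real.pi * Complex.I * ((l : ℂ) + ((r : ℂ) - 1) / 2) / M) +
              Complex.exp (2 * Real.pi * Complex.I * ((l : ℂ) + ((r : ℂ) - 1) / 2) / M)) ^ N := by
  have hM0 : (M : ℂ) ≠ 0 := Nat.cast_ne_zero.mpr hM.ne'
  -- rewrite RHS as a double sum and swap
  have step1 : Complex.exp (((r : ℂ) - 1) * Real.pi * Complex.I * ((a : ℂ) - (e : ℂ)) / M) *
        ∑ l ∈ Finset.range M,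
          Complex.exp (-2 * Real.pi * Complex.I * ((e : ℂ) - (a : ℂ)) * l / M) *
            (x * Complex.exp (-2 * Real.pi * Complex.I * ((l : ℂ) + ((r : ℂ) - 1) / 2) / M) +
              Complex.exp (2 * Real.pi * Complex.I * ((l : ℂ) + ((r : ℂ) - 1) / 2) / M)) ^ N
      = ∑ d ∈ Finset.range (N + 1), ∑ l ∈ Finset.range M,
          (N.choose d : ℂ) * x ^ d *
            Complex.exp (2 * Real.pi * Complex.I * ((a + (N : ℤ) - 2 * (d : ℤ) - e : ℤ) : ℂ) * (((r : ℂ) - 1) / 2) / M) *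
            Complex.exp (2 * Real.pi * Complex.I * ((a + (N : ℤ) - 2 * (d : ℤ) - e : ℤ) : ℂ) / M) ^ l := by
    rw [Finset.mul_sum, ← Finset.sum_comm]
    refine Finset.sum_congr rfl fun l hl => ?_
    rw [add_pow, Finset.mul_sum, Finset.mul_sum]
    refine Finset.sum_congr rfl fun d hd => ?_
    have hd' : d ≤ N := Nat.lt_succ_iff.mp (Finset.mem_range.mp hd)
    rw [mul_pow, ← Complex.exp_nat_mul, ← Complex.exp_nat_mul, ← Complex.exp_nat_mul]
    have key : Complex.exp (((r:ℂ)-1) * Real.pi * Complex.I * ((a:ℂ)-(e:ℂ)) / M) *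
        Complex.exp (-2 * Real.pi * Complex.I * ((e:ℂ)-(a:ℂ)) * l / M) *
        Complex.exp ((d:ℂ) * (-2 * Real.pi * Complex.I * ((l:ℂ) + ((r:ℂ)-1)/2) / M)) *
        Complex.exp (((N-d:ℕ):ℂ) * (2 * Real.pi * Complex.I * ((l:ℂ) + ((r:ℂ)-1)/2) / M)) =
        Complex.exp (2 * Real.pi * Complex.I * ((a + (N:ℤ) - 2*(d:ℤ) - e : ℤ):ℂ) * (((r:ℂ)-1)/2) / M) *
        Complex.exp ((l:ℂ) * (2 * Real.pi * Complex.I * ((a + (N:ℤ) - 2*(d:ℤ) - e : ℤ):ℂ) / M)) := by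
      rw [← Complex.exp_add, ← Complex.exp_add, ← Complex.exp_add, ← Complex.exp_add]
      congr 1
      have hNd : ((N-d:ℕ):ℂ) = (N:ℂ) - d := by push_cast [Nat.cast_sub hd']; ring
      rw [hNd]; push_cast; field_simp; ring
    linear_combination ((N.choose d : ℂ) * x ^ d) * key
  rw [step1, qxy, Finset.mul_sum]
  refine Finset.sum_congr rfl fun d hd => ?_
  rw [← Finset.mul_sum, root_sum M hM (a + (N:ℤ) - 2*(d:ℤ) - e)]
  split_ifs with h
  · obtain ⟨k, hk⟩ := h
    rw [hk, Wval M r hM hr k, Int.mul_ediv_cancel_left k (by exact_mod_cast hM.ne' : (M:ℤ) ≠ 0)]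
    ring
  · simp
/-- the determinant `det (q(M,N,a i,e j;x,(-1)^(r-1)))` equals the
trigonometric determinant of equation (eq:det-gfxr). -/
theorem stmt9 (M : ℕ) (hM : 1 ≤ M) (N r : ℕ) (hr : 1 ≤ r) (x : ℂ) (a e : Fin r → ℤ)
    (ha0 : ∀ i, 0 ≤ a i) (haM : ∀ i, a i < M) (hamono : StrictMono a)
    (he0 : ∀ i, 0 ≤ e i) (heM : ∀ i, e i < M) (hemono : StrictMono e)
    (hpar : ∀ i j : Fin r, (2 : ℤ) ∣ ((N : ℤ) - e i + a j)) :
    Matrix.det (Matrix.of fun i j : Fin r => qxy M N (a i) (e j) x ((-1 : ℂ) ^ (r - 1)))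
      = ((M : ℂ)) ^ (-(r : ℤ)) *
          Matrix.det (Matrix.of fun i j : Fin r =>
            Complex.exp (((r : ℂ) - 1) * Real.pi * Complex.I * ((a i : ℂ) - (e j : ℂ)) / M) *
              ∑ l ∈ Finset.range M,
                Complex.exp (-2 * Real.pi * Complex.I * ((e j : ℂ) - (a i : ℂ)) * l / M) *
                  (x * Complex.exp (-2 * Real.pi * Complex.I * ((l : ℂ) + ((r : ℂ) - 1) / 2) / M) +
                    Complex.exp (2 * Real.pi * Complex.I * ((l : ℂ) + ((r : ℂ) - 1) / 2) / M)) ^ N) := by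
  have hM0 : (M : ℂ) ≠ 0 := Nat.cast_ne_zero.mpr (by omega)
  have hB : (Matrix.of fun i j : Fin r =>
        Complex.exp (((r : ℂ) - 1) * Real.pi * Complex.I * ((a i : ℂ) - (e j : ℂ)) / M) *
          ∑ l ∈ Finset.range M,
            Complex.exp (-2 * Real.pi * Complex.I * ((e j : ℂ) - (a i : ℂ)) * l / M) *
              (x * Complex.exp (-2 * Real.pi * Complex.I * ((l : ℂ) + ((r : ℂ) - 1) / 2) / M) +
                Complex.exp (2 * Real.pi * Complex.I * ((l : ℂ) + ((r : ℂ) - 1) / 2) / M)) ^ N)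
      = (M : ℂ) • (Matrix.of fun i j : Fin r => qxy M N (a i) (e j) x ((-1 : ℂ) ^ (r - 1))) := by
    ext i j
    simp only [Matrix.of_apply, Matrix.smul_apply, smul_eq_mul]
    exact (entry M N r (by omega) hr (a i) (e j) x).symm
  rw [hB, Matrix.det_smul]
  simp only [Fintype.card_fin, zpow_neg, zpow_natCast]
  rw [inv_mul_cancel_left₀ (pow_ne_zero r hM0)]
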